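/- Let ℓ be a natural number, α > 0 and p ≥ 1 real numbers, and let u_0 ≤ u_1 ≤ ⋯ ≤ u_ℓ and v_0 ≤ v_1 ≤ ⋯ ≤ v_ℓ be nonnegative reals such that α·(u_ℓ − u_i) ≤ v_ℓ − v_i for every i ∈ {0, …, ℓ−1} and α·u_ℓ ≤ v_ℓ. Then p·u_0 + ∑_{i=1}^{ℓ} p·2^{i(p−1)}·(u_i − u_{i−1}) ≤ (2^p/α)·(v_0 + ∑_{i=1}^{ℓ} p·2^{(i−1)(p−1)}·(v_i − v_{i−1})). -/
import Mathlib

set_option maxHeartbeats 800000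

lemma abel_aux (C a : ℕ → ℝ) (n : ℕ) :
    ∑ j ∈ Finset.range (n + 1), C j * (a j - a (j + 1))
      = C 0 * a 0 + (∑ j ∈ Finset.range n, (C (j + 1) - C j) * a (j + 1))
        - C n * a (n + 1) := by
  induction n with
  | zero => simp; ring
  | succ m ih => rw [Finset.sum_range_succ, ih, Finset.sum_range_succ]; ring

lemma mono_aux (u : ℕ → ℝ) : ∀ ℓ : ℕ, (∀ i < ℓ, u i ≤ u (i + 1)) → ∀ i ≤ ℓ, u i ≤ u ℓ := by
  intro ℓ
  induction ℓ with
  | zero => intro _ i hi; simp [Nat.le_zero.mp hi]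
  | succ n ih =>
    intro h i hi
    rcases eq_or_lt_of_le hi with rfl | h'
    · exact le_rfl
    · exact le_trans (ih (fun j hj => h j (by omega)) i (by omega)) (h n (by omega))

/-- Comparison of the telescoping upper and lower bound expressions:
if `α·(u_ℓ − u_i) ≤ v_ℓ − v_i` for all `i < ℓ` and `α·u_ℓ ≤ v_ℓ`, then
`p·u_0 + ∑ p·2^{i(p−1)}(u_i − u_{i−1}) ≤ (2^p/α)·(v_0 + ∑ p·2^{(i−1)(p−1)}(v_i − v_{i−1}))`. -/
theorem stmt_10 (ℓ : ℕ) (α p : ℝ) (hα : 0 < α) (hp : 1 ≤ p)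
    (u v : ℕ → ℝ)
    (hunn : ∀ i ≤ ℓ, 0 ≤ u i) (hvnn : ∀ i ≤ ℓ, 0 ≤ v i)
    (humono : ∀ i < ℓ, u i ≤ u (i + 1)) (hvmono : ∀ i < ℓ, v i ≤ v (i + 1))
    (hrel : ∀ i < ℓ, α * (u ℓ - u i) ≤ v ℓ - v i)
    (hrelℓ : α * u ℓ ≤ v ℓ) :
    p * u 0 + ∑ i ∈ Finset.Icc 1 ℓ, p * (2 : ℝ) ^ ((i : ℝ) * (p - 1)) * (u i - u (i - 1))
      ≤ (2 : ℝ) ^ p / α *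
        (v 0 + ∑ i ∈ Finset.Icc 1 ℓ,
          p * (2 : ℝ) ^ (((i : ℝ) - 1) * (p - 1)) * (v i - v (i - 1))) := by
  have h2 : (0:ℝ) < 2 := two_pos
  set X : ℝ := (2:ℝ) ^ (p - 1) with hXdef
  have hXpos : 0 < X := Real.rpow_pos_of_pos h2 _
  have hX1 : (1:ℝ) ≤ X := Real.one_le_rpow one_le_two (by linarith)
  have hsplit : ∀ t : ℝ, (2:ℝ) ^ (t + (p - 1)) = 2 ^ t * X := fun t => by
    rw [hXdef]; exact Real.rpow_add h2 t (p - 1)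
  have h2p : (2:ℝ) ^ p = 2 * X := by
    have := hsplit 1
    rw [Real.rpow_one, show (1:ℝ) + (p-1) = p by ring] at this
    exact this
  have hlog : (1:ℝ)/2 < Real.log 2 := by
    have := Real.log_two_gt_d9; linarith
  have hexp : Real.log 2 * (p - 1) + 1 ≤ X := by
    rw [hXdef, Real.rpow_def_of_pos h2]
    exact Real.add_one_le_exp _
  have h2pge : p + 1 ≤ 2 * X := by nlinarith [hexp, hlog, hp]
  cases ℓ with
  | zero =>
    rw [show Finset.Icc 1 0 = (∅ : Finset ℕ) from rfl]
    simp only [Finset.sum_empty, add_zero]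
    rw [h2p, div_mul_eq_mul_div, le_div_iff₀ hα]
    have h1 := hrelℓ
    have h2' := hunn 0 le_rfl
    nlinarith [mul_le_mul_of_nonneg_left h1 (by positivity : (0:ℝ) ≤ 2*X),
      mul_nonneg h2' hα.le]
  | succ m =>
    have hmono_u := mono_aux u (m+1) humono
    have hmono_v := mono_aux v (m+1) hvmono
    set a : ℕ → ℝ := fun i => u (m+1) - u i with ha
    set b : ℕ → ℝ := fun i => v (m+1) - v i with hb
    set C : ℕ → ℝ := fun j => p * (2:ℝ) ^ (((j:ℝ) + 1) * (p - 1)) with hC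
    set D : ℕ → ℝ := fun j => p * (2:ℝ) ^ ((j:ℝ) * (p - 1)) with hD
    have hU : ∑ i ∈ Finset.Icc 1 (m+1), p * (2 : ℝ) ^ ((i : ℝ) * (p - 1)) * (u i - u (i - 1))
        = ∑ j ∈ Finset.range (m+1), C j * (a j - a (j+1)) := by
      rw [← Finset.Ico_add_one_right_eq_Icc, Finset.sum_Ico_eq_sum_range]
      refine Finset.sum_congr (by norm_num) fun j hj => ?_
      simp only [hC, ha]
      rw [show 1 + j = j + 1 from Nat.add_comm 1 j]
      simp only [Nat.add_sub_cancel]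
      push_cast
      ring
    have hV : ∑ i ∈ Finset.Icc 1 (m+1), p * (2 : ℝ) ^ (((i : ℝ) - 1) * (p - 1)) * (v i - v (i - 1))
        = ∑ j ∈ Finset.range (m+1), D j * (b j - b (j+1)) := by
      rw [← Finset.Ico_add_one_right_eq_Icc, Finset.sum_Ico_eq_sum_range]
      refine Finset.sum_congr (by norm_num) fun j hj => ?_
      simp only [hD, hb]
      rw [show 1 + j = j + 1 from Nat.add_comm 1 j]
      simp only [Nat.add_sub_cancel]
      push_cast
      ring
    rw [hU, hV, abel_aux C a m, abel_aux D b m]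
    have ham : a (m+1) = 0 := by simp [ha]
    have hbm : b (m+1) = 0 := by simp [hb]
    rw [ham, hbm, mul_zero, mul_zero, sub_zero, sub_zero]
    have hC0 : C 0 = p * X := by
      simp only [hC, hXdef, Nat.cast_zero, zero_add, one_mul]
    have hD0 : D 0 = p := by
      simp only [hD, Nat.cast_zero, zero_mul, Real.rpow_zero, mul_one]
    have ha0 : a 0 = u (m+1) - u 0 := by simp [ha]
    have hb0 : b 0 = v (m+1) - v 0 := by simp [hb]
    rw [h2p, div_mul_eq_mul_div, le_div_iff₀ hα, hC0, hD0, ha0, hb0]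
    -- sum comparison
    have hsum : (∑ j ∈ Finset.range m, (C (j+1) - C j) * a (j+1)) * α
        ≤ 2 * X * (∑ j ∈ Finset.range m, (D (j+1) - D j) * b (j+1)) := by
      rw [Finset.sum_mul, Finset.mul_sum]
      refine Finset.sum_le_sum fun j hj => ?_
      have hjm : j < m := Finset.mem_range.mp hj
      have hab : α * a (j+1) ≤ b (j+1) := by
        simp only [ha, hb]; exact hrel (j+1) (by omega)
      have hann : 0 ≤ a (j+1) := by
        simp only [ha]
        have := hmono_u (j+1) (by omega); linarith
      have hbnn : 0 ≤ b (j+1) := le_trans (mul_nonneg hα.le hann) hab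
      simp only [hC, hD]
      push_cast
      rw [show ((j:ℝ) + 1 + 1) * (p - 1) = ((j:ℝ) + 1) * (p - 1) + (p - 1) by ring, hsplit,
        show ((j:ℝ) + 1) * (p - 1) = (j:ℝ) * (p - 1) + (p - 1) by ring, hsplit]
      have hT : (0:ℝ) < (2:ℝ) ^ ((j:ℝ) * (p - 1)) := Real.rpow_pos_of_pos h2 _
      set T : ℝ := (2:ℝ) ^ ((j:ℝ) * (p - 1))
      have hcoef : 0 ≤ p * T * X * (X - 1) := by
        have : (0:ℝ) ≤ p * T * X := by positivity
        nlinarith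
      have h1 : p * T * X * (X - 1) * (α * a (j+1)) ≤ p * T * X * (X - 1) * b (j+1) :=
        mul_le_mul_of_nonneg_left hab hcoef
      nlinarith [h1, mul_nonneg hcoef hbnn]
    -- head comparison
    have hhead : (p * u 0 + p * X * (u (m+1) - u 0)) * α
        ≤ 2 * X * (v 0 + p * (v (m+1) - v 0)) := by
      have ha0' : α * (u (m+1) - u 0) ≤ v (m+1) - v 0 := hrel 0 (by omega)
      have hu0 : 0 ≤ u 0 := hunn 0 (by omega)
      have huℓ : u 0 ≤ u (m+1) := hmono_u 0 (by omega)
      have hαu := hrelℓ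
      have key : p * u 0 + p * X * (u (m+1) - u 0)
          ≤ 2 * X * u (m+1) + 2 * X * (p - 1) * (u (m+1) - u 0) := by
        nlinarith [mul_nonneg hu0 (by linarith : (0:ℝ) ≤ 2*X - p),
          mul_nonneg (sub_nonneg.2 huℓ) (by positivity : (0:ℝ) ≤ p * X)]
      have key2 := mul_le_mul_of_nonneg_right key hα.le
      have hbig1 : 2 * X * (α * u (m+1)) ≤ 2 * X * v (m+1) :=
        mul_le_mul_of_nonneg_left hαu (by positivity)
      have hbig2 : 2 * X * (p - 1) * (α * (u (m+1) - u 0)) ≤ 2 * X * (p - 1) * (v (m+1) - v 0) :=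
        mul_le_mul_of_nonneg_left ha0' (mul_nonneg (by positivity) (by linarith))
      linarith [key2, hbig1, hbig2]
    linarith [hsum, hhead]
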